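/- Let Q ∈ ℝ[X,Y], let r > 0, fix signs ε, ε_B, δ ∈ {−1, 1}, let μ : ℝ → ℝ be one of the functions t ↦ δ·cos t, t ↦ δ·cosh t, t ↦ sinh t, and let κ : ℝ → ℝ satisfy the Lorentzian regularity condition. Then Q(K(s,t), H(s,t)) = 0 for all s, t ∈ ℝ if and only if either (i) the polynomial r²·X − 2r·Y + ε divides Q, or (ii) κ is identically zero and Q(0, ε/(2r)) = 0. -/

import Mathlib

open MvPolynomial

noncomputable def iota1 : MvPolynomial (Fin 1) ℝ ≃ₐ[ℝ] Polynomial ℝ :=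
  (MvPolynomial.renameEquiv ℝ (Equiv.equivPUnit.{1,1} (Fin 1))).trans (MvPolynomial.pUnitAlgEquiv ℝ)

lemma iota1_X0 : iota1 (X 0) = Polynomial.X := by
  simp [iota1]

lemma iota1_C (c : ℝ) : iota1 (C c) = Polynomial.C c := by
  simp [iota1]

noncomputable def Ebig : MvPolynomial (Fin 2) ℝ ≃ₐ[ℝ] Polynomial (Polynomial ℝ) :=
  (MvPolynomial.finSuccEquiv ℝ 1).trans (Polynomial.mapAlgEquiv iota1)

lemma Ebig_X0 : Ebig (X 0) = Polynomial.X := by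
  simp [Ebig, MvPolynomial.finSuccEquiv_X_zero, Polynomial.mapAlgEquiv]

lemma Ebig_X1 : Ebig (X 1) = Polynomial.C Polynomial.X := by
  have : (X 1 : MvPolynomial (Fin 2) ℝ) = X (Fin.succ 0) := rfl
  rw [Ebig, AlgEquiv.trans_apply, this, MvPolynomial.finSuccEquiv_X_succ]
  simp [Polynomial.mapAlgEquiv, iota1_X0]

lemma Ebig_C (c : ℝ) : Ebig (C c) = Polynomial.C (Polynomial.C c) := by
  rw [Ebig, AlgEquiv.trans_apply]
  rw [show (C c : MvPolynomial (Fin 2) ℝ) = algebraMap ℝ _ c from rfl, AlgEquiv.commutes]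
  simp [Polynomial.mapAlgEquiv, iota1_C, Polynomial.algebraMap_apply]

lemma key_div (r eps : ℝ) (hr : r ≠ 0) (Q : MvPolynomial (Fin 2) ℝ) :
    (C (r ^ 2) * X 0 - C (2 * r) * X 1 + C eps) ∣ Q ↔
      aeval ![Polynomial.C (r ^ 2)⁻¹ * (Polynomial.C (2 * r) * Polynomial.X - Polynomial.C eps),
        Polynomial.X] Q = 0 := by
  set a : Polynomial ℝ :=
    Polynomial.C (r ^ 2)⁻¹ * (Polynomial.C (2 * r) * Polynomial.X - Polynomial.C eps) with ha
  have hr2 : (r ^ 2 : ℝ) ≠ 0 := pow_ne_zero 2 hr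
  have hCa : Polynomial.C (r ^ 2) * a = Polynomial.C (2 * r) * Polynomial.X - Polynomial.C eps := by
    rw [ha, ← mul_assoc, ← Polynomial.C_mul, mul_inv_cancel₀ hr2, Polynomial.C_1, one_mul]
  have hEP : Ebig (C (r ^ 2) * X 0 - C (2 * r) * X 1 + C eps)
      = Polynomial.C (Polynomial.C (r ^ 2)) * (Polynomial.X - Polynomial.C a) := by
    rw [map_add, map_sub, map_mul, map_mul, Ebig_X0, Ebig_X1, Ebig_C, Ebig_C, Ebig_C]
    have h2 : Polynomial.C (Polynomial.C (r ^ 2)) * Polynomial.C a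
        = Polynomial.C (Polynomial.C (2 * r) * Polynomial.X) - Polynomial.C (Polynomial.C eps) := by
      rw [← Polynomial.C_mul, hCa, Polynomial.C_sub]
    rw [mul_sub, h2]
    simp only [Polynomial.C_mul]
    ring
  have hu : IsUnit (Polynomial.C (Polynomial.C (r ^ 2)) : Polynomial (Polynomial ℝ)) :=
    ((isUnit_iff_ne_zero.mpr hr2).map Polynomial.C).map Polynomial.C
  rw [← map_dvd_iff Ebig, hEP, hu.mul_left_dvd, Polynomial.dvd_iff_isRoot]
  have hF : ((Polynomial.aeval a).restrictScalars ℝ).comp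
        (Ebig : MvPolynomial (Fin 2) ℝ →ₐ[ℝ] Polynomial (Polynomial ℝ))
      = aeval ![a, Polynomial.X] := by
    apply MvPolynomial.algHom_ext
    intro i
    fin_cases i <;>
      simp [AlgHom.coe_comp, Function.comp_apply, Ebig_X0, Ebig_X1]
  have := DFunLike.congr_fun hF Q
  simp only [AlgHom.coe_comp, Function.comp_apply, AlgHom.coe_restrictScalars'] at this
  rw [Polynomial.IsRoot, ← Polynomial.coe_aeval_eq_eval]
  rw [show ((Ebig : MvPolynomial (Fin 2) ℝ →ₐ[ℝ] Polynomial (Polynomial ℝ)) Q) = Ebig Q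
    from rfl] at this
  rw [this]

lemma eval_aeval_poly (v : Fin 2 → Polynomial ℝ) (h : ℝ) (Q : MvPolynomial (Fin 2) ℝ) :
    (aeval v Q).eval h = eval (fun i => (v i).eval h) Q := by
  have hc := MvPolynomial.comp_aeval (f := v) (φ := Polynomial.aeval h)
  have := DFunLike.congr_fun hc Q
  simp only [AlgHom.coe_comp, Function.comp_apply] at this
  rw [← Polynomial.coe_aeval_eq_eval, this]
  rw [MvPolynomial.aeval_def, MvPolynomial.eval, Algebra.algebraMap_self]
  rfl

theorem stmt_16 (Q : MvPolynomial (Fin 2) ℝ) (r : ℝ) (hr : 0 < r)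
    (ε εB δ : ℝ) (hε : ε = -1 ∨ ε = 1) (hεB : εB = -1 ∨ εB = 1) (hδ : δ = -1 ∨ δ = 1)
    (μ : ℝ → ℝ)
    (hμ : (∀ t, μ t = δ * Real.cos t) ∨ (∀ t, μ t = δ * Real.cosh t) ∨
      (∀ t, μ t = Real.sinh t))
    (κ : ℝ → ℝ) (hreg : ∀ s t : ℝ, 1 + εB * r * κ s * μ t ≠ 0) :
    (∀ s t : ℝ,
        eval ![ε * εB * κ s * μ t / (r * (1 + εB * r * κ s * μ t)),
          ε * (2 * εB * r * κ s * μ t + 1) / (2 * r * (1 + εB * r * κ s * μ t))] Q = 0) ↔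
      ((C (r ^ 2) * X 0 - C (2 * r) * X 1 + C ε) ∣ Q ∨
        ((∀ s, κ s = 0) ∧ eval ![0, ε / (2 * r)] Q = 0)) := by
  have hrne : r ≠ 0 := hr.ne'
  have hεne : ε ≠ 0 := by rcases hε with h | h <;> rw [h] <;> norm_num
  have hεBne : εB ≠ 0 := by rcases hεB with h | h <;> rw [h] <;> norm_num
  have hδne : δ ≠ 0 := by rcases hδ with h | h <;> rw [h] <;> norm_num
  -- if κ s = 0 then the evaluation vector is ![0, ε/(2r)]
  have hvec0 : ∀ s t : ℝ, κ s = 0 →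
      (![ε * εB * κ s * μ t / (r * (1 + εB * r * κ s * μ t)),
        ε * (2 * εB * r * κ s * μ t + 1) / (2 * r * (1 + εB * r * κ s * μ t))] : Fin 2 → ℝ)
        = ![0, ε / (2 * r)] := by
    intro s t h
    funext i
    fin_cases i <;> simp [h]
  -- injectivity of μ on Ioo 0 1
  have hμinj : ∀ t₁ ∈ Set.Ioo (0:ℝ) 1, ∀ t₂ ∈ Set.Ioo (0:ℝ) 1, μ t₁ = μ t₂ → t₁ = t₂ := by
    rcases hμ with h | h | h
    · intro t₁ ht₁ t₂ ht₂ hm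
      rw [h t₁, h t₂] at hm
      have hc : Real.cos t₁ = Real.cos t₂ := mul_left_cancel₀ hδne hm
      have hpi := Real.pi_gt_three
      exact Real.injOn_cos ⟨ht₁.1.le, by linarith [ht₁.2]⟩ ⟨ht₂.1.le, by linarith [ht₂.2]⟩ hc
    · intro t₁ ht₁ t₂ ht₂ hm
      rw [h t₁, h t₂] at hm
      have hc : Real.cosh t₁ = Real.cosh t₂ := mul_left_cancel₀ hδne hm
      exact Real.cosh_strictMonoOn.injOn ht₁.1.le ht₂.1.le hc
    · intro t₁ ht₁ t₂ ht₂ hm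
      rw [h t₁, h t₂] at hm
      exact Real.sinh_injective hm
  constructor
  · intro hQ
    by_cases hκ0 : ∀ s, κ s = 0
    · right
      refine ⟨hκ0, ?_⟩
      have := hQ 0 0
      rw [hvec0 0 0 (hκ0 0)] at this
      exact this
    · left
      push_neg at hκ0
      obtain ⟨s₀, hs₀⟩ := hκ0
      rw [key_div r ε hrne Q]
      apply Polynomial.eq_zero_of_infinite_isRoot
      set f : ℝ → ℝ := fun t =>
        ε * (2 * εB * r * κ s₀ * μ t + 1) / (2 * r * (1 + εB * r * κ s₀ * μ t)) with hf
      have hroot : ∀ t : ℝ,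
          (aeval ![Polynomial.C (r ^ 2)⁻¹ *
            (Polynomial.C (2 * r) * Polynomial.X - Polynomial.C ε), Polynomial.X] Q).IsRoot
            (f t) := by
        intro t
        rw [Polynomial.IsRoot, eval_aeval_poly]
        have hvec : (fun i => ((![Polynomial.C (r ^ 2)⁻¹ *
            (Polynomial.C (2 * r) * Polynomial.X - Polynomial.C ε), Polynomial.X] : Fin 2 →
              Polynomial ℝ) i).eval (f t))
            = ![ε * εB * κ s₀ * μ t / (r * (1 + εB * r * κ s₀ * μ t)),
              ε * (2 * εB * r * κ s₀ * μ t + 1) / (2 * r * (1 + εB * r * κ s₀ * μ t))] := by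
          funext i
          have hD := hreg s₀ t
          have hD' : 1 + r * εB * κ s₀ * μ t ≠ 0 := by rwa [mul_comm r εB]
          fin_cases i
          · simp only [Fin.zero_eta, Matrix.cons_val_zero, Polynomial.eval_mul, Polynomial.eval_C,
              Polynomial.eval_sub, Polynomial.eval_X, hf]
            field_simp
            ring
          · simp [hf]
        rw [hvec]
        exact hQ s₀ t
      have hinj : Set.InjOn f (Set.Ioo 0 1) := by
        intro t₁ ht₁ t₂ ht₂ hft
        have hD₁ := hreg s₀ t₁
        have hD₂ := hreg s₀ t₂
        have h2r₁ : 2 * r * (1 + εB * r * κ s₀ * μ t₁) ≠ 0 := by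
          apply mul_ne_zero (by norm_num [hrne]) hD₁
        have h2r₂ : 2 * r * (1 + εB * r * κ s₀ * μ t₂) ≠ 0 := by
          apply mul_ne_zero (by norm_num [hrne]) hD₂
        rw [hf] at hft
        simp only at hft
        rw [div_eq_div_iff h2r₁ h2r₂] at hft
        have h2 : 2 * r ^ 2 * ε * εB * κ s₀ * (μ t₁ - μ t₂) = 0 := by
          linear_combination hft
        have hne : 2 * r ^ 2 * ε * εB * κ s₀ ≠ 0 := by
          apply mul_ne_zero (mul_ne_zero (mul_ne_zero (by positivity) hεne) hεBne) hs₀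
        have hm : μ t₁ = μ t₂ :=
          sub_eq_zero.mp ((mul_eq_zero.mp h2).resolve_left hne)
        exact hμinj t₁ ht₁ t₂ ht₂ hm
      have hinf : (f '' Set.Ioo 0 1).Infinite :=
        Set.Infinite.image hinj (Set.Ioo_infinite (by norm_num))
      apply hinf.mono
      rintro x ⟨t, _, rfl⟩
      exact hroot t
  · rintro (⟨R, hR⟩ | ⟨hκ0, hQ0⟩) s t
    · rw [hR, map_mul]
      have hP0 : eval ![ε * εB * κ s * μ t / (r * (1 + εB * r * κ s * μ t)),
          ε * (2 * εB * r * κ s * μ t + 1) / (2 * r * (1 + εB * r * κ s * μ t))]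
          (C (r ^ 2) * X 0 - C (2 * r) * X 1 + C ε) = 0 := by
        have hD := hreg s t
        have hD' : 1 + r * εB * κ s * μ t ≠ 0 := by rwa [mul_comm r εB]
        simp only [map_add, map_sub, map_mul, eval_C, eval_X, Matrix.cons_val_zero,
          Matrix.cons_val_one, Matrix.head_cons]
        field_simp
        ring
      rw [hP0, zero_mul]
    · rw [hvec0 s t (hκ0 s)]
      exact hQ0
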